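/- Nonexistence half of Lemma 1 (normalized to the unit sphere): Let A and B be unit vectors in ℝ³ with d = angle(A, B) ∈ (0, π), and let α ∈ (0, π) satisfy d > α. Then there is no unit vector C, not parallel to A or to B, with angle(C, A) = angle(C, B) and spherical angle at C between A and B equal to α. -/
import Mathlib


open Real InnerProductGeometry RealInnerProductSpace

/-- The spherical angle at `u` between `v` and `w`: the angle between the tangential
components of `v` and `w` at `u`. -/
noncomputable def sphAngle (u v w : EuclideanSpace ℝ (Fin 3)) : ℝ :=
  InnerProductGeometry.angle (v - ⟪v, u⟫ • u) (w - ⟪w, u⟫ • u)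

/-- Nonexistence half of Lemma 1: if the base `d = angle A B` satisfies `d > α`, there is no
apex `C` of an isosceles spherical triangle over base `AB` with apex angle `α`. -/
theorem isosceles_spherical_triangle_not_exists (A B : EuclideanSpace ℝ (Fin 3))
    (hA : ‖A‖ = 1) (hB : ‖B‖ = 1) (d α : ℝ) (hd : d = angle A B)
    (hd0 : 0 < d) (hdπ : d < π) (hα0 : 0 < α) (hαπ : α < π) (hdα : d > α) :
    ¬ ∃ C : EuclideanSpace ℝ (Fin 3), ‖C‖ = 1 ∧
      C ≠ A ∧ C ≠ -A ∧ C ≠ B ∧ C ≠ -B ∧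
      angle C A = angle C B ∧ sphAngle C A B = α := by
  rintro ⟨C, hC, hCA, hCA', hCB, hCB', hiso, hsph⟩
  have hCC : ⟪C, C⟫ = 1 := by
    rw [real_inner_self_eq_norm_sq, hC]; norm_num
  have hAA : ⟪A, A⟫ = 1 := by
    rw [real_inner_self_eq_norm_sq, hA]; norm_num
  have hBB : ⟪B, B⟫ = 1 := by
    rw [real_inner_self_eq_norm_sq, hB]; norm_num
  set a : ℝ := ⟪A, C⟫ with ha
  set b : ℝ := ⟪B, C⟫ with hb
  have hca : ⟪C, A⟫ = a := by rw [real_inner_comm]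
  have hcb : ⟪C, B⟫ = b := by rw [real_inner_comm]
  -- equal legs give equal inner products
  have hab : a = b := by
    have h1 := InnerProductGeometry.cos_angle C A
    have h2 := InnerProductGeometry.cos_angle C B
    rw [hiso, h2, hB, hC, hA] at h1
    rw [← hca, ← hcb]
    simpa using h1.symm
  -- tangential components nonzero
  have hAne : A - a • C ≠ 0 := by
    intro h
    have hAC : A = a • C := by rwa [sub_eq_zero] at h
    have hna : |a| = 1 := by
      have := congrArg norm hAC
      rwa [norm_smul, hC, mul_one, hA, Real.norm_eq_abs, eq_comm] at this
    rcases abs_eq (by norm_num : (0:ℝ) ≤ 1) |>.mp hna with h1 | h1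
    · exact hCA (by rw [hAC, h1, one_smul])
    · exact hCA' (by rw [hAC, h1, neg_one_smul, neg_neg])
  have hBne : B - b • C ≠ 0 := by
    intro h
    have hBC : B = b • C := by rwa [sub_eq_zero] at h
    have hnb : |b| = 1 := by
      have := congrArg norm hBC
      rwa [norm_smul, hC, mul_one, hB, Real.norm_eq_abs, eq_comm] at this
    rcases abs_eq (by norm_num : (0:ℝ) ≤ 1) |>.mp hnb with h1 | h1
    · exact hCB (by rw [hBC, h1, one_smul])
    · exact hCB' (by rw [hBC, h1, neg_one_smul, neg_neg])
  -- norms of tangential components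
  have hA2 : ‖A - a • C‖ ^ 2 = 1 - a ^ 2 := by
    rw [← real_inner_self_eq_norm_sq]
    simp only [inner_sub_left, inner_sub_right, real_inner_smul_left, real_inner_smul_right,
      hCC, hAA, hca, ← ha]
    ring
  have hB2 : ‖B - b • C‖ ^ 2 = 1 - b ^ 2 := by
    rw [← real_inner_self_eq_norm_sq]
    simp only [inner_sub_left, inner_sub_right, real_inner_smul_left, real_inner_smul_right,
      hCC, hBB, hcb, ← hb]
    ring
  have hpos : 0 < 1 - a ^ 2 := by
    rw [← hA2]; exact pow_pos (norm_pos_iff.mpr hAne) 2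
  have hnormeq : ‖A - a • C‖ = ‖B - b • C‖ := by
    have hsq : ‖A - a • C‖ ^ 2 = ‖B - b • C‖ ^ 2 := by rw [hA2, hB2, hab]
    have := congrArg Real.sqrt hsq
    rwa [Real.sqrt_sq (norm_nonneg _), Real.sqrt_sq (norm_nonneg _)] at this
  -- inner product of tangential components
  have hinner : ⟪A - a • C, B - b • C⟫ = ⟪A, B⟫ - a * b := by
    simp only [inner_sub_left, inner_sub_right, real_inner_smul_left, real_inner_smul_right,
      hCC, hca, hcb, ← ha, ← hb]
    ring
  -- cos of the apex angle
  have hcosα : Real.cos α = (⟪A, B⟫ - a * a) / (1 - a ^ 2) := by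
    rw [← hsph]
    unfold sphAngle
    rw [InnerProductGeometry.cos_angle, hinner, hnormeq, ← sq, hB2, ← hab]
  -- cos of the base
  have hcosd : Real.cos d = ⟪A, B⟫ := by
    rw [hd, InnerProductGeometry.cos_angle, hA, hB]; norm_num
  -- law of cosines combination: cos d = a² + (1-a²) cos α
  have hkey : Real.cos d = a ^ 2 + (1 - a ^ 2) * Real.cos α := by
    rw [hcosα, hcosd]
    field_simp
    ring
  have hcosle : Real.cos α ≤ Real.cos d := by
    have h1 : Real.cos α ≤ 1 := Real.cos_le_one α
    nlinarith [sq_nonneg a]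
  have hlt : Real.cos d < Real.cos α :=
    Real.strictAntiOn_cos ⟨le_of_lt hα0, le_of_lt hαπ⟩ ⟨le_of_lt hd0, le_of_lt hdπ⟩ hdα
  linarith
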